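/- Let A ∈ ℝ^{s×m}. Then there exists y ∈ ℝ^m with Ay < 0 (componentwise strict inequality) if and only if u = 0 is the only vector u ∈ ℝ^s with u ≥ 0 and Aᵀu = 0. -/

import Mathlib

open Finset Matrix

theorem stmt_4 {s m : ℕ} (A : Matrix (Fin s) (Fin m) ℝ) :
    (∃ y : Fin m → ℝ, ∀ i, A.mulVec y i < 0) ↔
      (∀ u : Fin s → ℝ, (∀ i, 0 ≤ u i) → A.transpose.mulVec u = 0 → u = 0) := by
  constructor
  · rintro ⟨y, hy⟩ u hu hAu
    have hdot : u ⬝ᵥ A.mulVec y = 0 := by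
      rw [Matrix.dotProduct_mulVec, ← Matrix.mulVec_transpose, hAu, zero_dotProduct]
    have hterm : ∀ i ∈ Finset.univ, u i * A.mulVec y i ≤ 0 := fun i _ =>
      mul_nonpos_of_nonneg_of_nonpos (hu i) (hy i).le
    have hz := (Finset.sum_eq_zero_iff_of_nonpos hterm).mp hdot
    funext i
    have h := hz i (mem_univ i)
    rcases mul_eq_zero.mp h with h' | h'
    · exact h'
    · exact absurd h' (hy i).ne
  · intro H
    by_contra hno
    push_neg at hno
    -- Step 1: 0 must lie in the convex hull of the rows of A.
    have h0 : (0 : Fin m → ℝ) ∈ convexHull ℝ (Set.range fun i => A i) := by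
      by_contra h0
      have hfin : (Set.range fun i => A i).Finite := Set.finite_range _
      obtain ⟨f, c, hc0, hc⟩ :=
        geometric_hahn_banach_point_closed (convex_convexHull ℝ _)
          (hfin.isClosed_convexHull ℝ) h0
      rw [map_zero] at hc0
      set e : Fin m → (Fin m → ℝ) := fun j => fun j' => if j = j' then 1 else 0 with he
      have hfv : ∀ v : Fin m → ℝ, f v = ∑ j, v j * f (e j) := by
        intro v
        conv_lhs => rw [pi_eq_sum_univ v]
        rw [map_sum]
        simp [_root_.map_smul, smul_eq_mul, he]
      obtain ⟨i, hi0⟩ := hno (fun j => -(f (e j)))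
      have hi : c < f (A i) :=
        hc _ (subset_convexHull ℝ _ ⟨i, rfl⟩)
      have heq : A.mulVec (fun j => -(f (e j))) i = -(f (A i)) := by
        rw [hfv (A i)]
        simp [Matrix.mulVec, dotProduct, mul_comm]
      rw [heq] at hi0
      linarith
    -- Step 2: extract convex combination weights.
    rw [_root_.convexHull_eq] at h0
    obtain ⟨ι, t, w, z, hw0, hw1, hzr, hcm⟩ := h0
    have hcm' : ∑ i ∈ t, w i • z i = 0 := by
      rwa [Finset.centerMass_eq_of_sum_1 _ _ hw1] at hcm
    -- choose row indices for each point
    have hk : ∀ i ∈ t, ∃ j, A j = z i := fun i hi => hzr i hi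
    set k : {i // i ∈ t} → Fin s := fun i => (hk i.1 i.2).choose with hkdef
    have hkspec : ∀ i : {i // i ∈ t}, A (k i) = z i.1 := fun i => (hk i.1 i.2).choose_spec
    set u : Fin s → ℝ := fun j => ∑ i ∈ t.attach.filter (fun i => k i = j), w i.1 with hu
    have hu0 : ∀ j, 0 ≤ u j := by
      intro j
      exact Finset.sum_nonneg fun i hi => hw0 i.1 i.2
    have husum : ∑ j, u j = 1 := by
      rw [hu]
      rw [Finset.sum_fiberwise_of_maps_to (fun i _ => Finset.mem_univ (k i))]
      rw [Finset.sum_attach]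
      exact hw1
    have hAu : A.transpose.mulVec u = 0 := by
      have hsum : ∑ j, u j • A j = 0 := by
        rw [hu]
        simp_rw [Finset.sum_smul]
        have step1 : ∀ j : Fin s, ∑ i ∈ t.attach.filter (fun i => k i = j), w i.1 • A j
            = ∑ i ∈ t.attach.filter (fun i => k i = j), w i.1 • A (k i) := by
          intro j
          refine Finset.sum_congr rfl fun i hi => ?_
          rw [(Finset.mem_filter.mp hi).2]
        calc ∑ j : Fin s, ∑ i ∈ t.attach.filter (fun i => k i = j), w i.1 • A j
            = ∑ j : Fin s, ∑ i ∈ t.attach.filter (fun i => k i = j), w i.1 • A (k i) := by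
              exact Finset.sum_congr rfl fun j _ => step1 j
          _ = ∑ i ∈ t.attach, w i.1 • A (k i) :=
              Finset.sum_fiberwise_of_maps_to (fun i _ => Finset.mem_univ (k i))
                (fun i => w i.1 • A (k i))
          _ = ∑ i ∈ t, w i • z i := by
              rw [← Finset.sum_attach t (fun i => w i • z i)]
              exact Finset.sum_congr rfl fun i _ => by rw [hkspec i]
          _ = 0 := hcm'
      funext j'
      have := congrFun hsum j'
      simpa [Matrix.mulVec, dotProduct, Matrix.transpose, Finset.sum_apply,
        mul_comm] using this
    have := H u hu0 hAu
    rw [this] at husum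
    simp at husum
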